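/- Let A(γ) = diag(β̂)(W + γ𝟙𝟙ᵀ) where W is the adjacency matrix of the counterexample graph G, β̂ assigns β̄ > δ to all nodes of C_m, and ρ(diag(β̂(C_m))U) = β̄ > δ. Then ε(β̂; 0) = δ − β̄ < 0, i.e., under the greedy allocation the disease-free equilibrium of the linearized dynamics is unstable at γ = 0. -/

import Mathlib

lemma spec_iff_aux {ι : Type*} [Fintype ι] [DecidableEq ι] (A : Matrix ι ι ℂ) (μ : ℂ) :
    μ ∈ spectrum ℂ A ↔ ∃ v, v ≠ 0 ∧ A.mulVec v = μ • v := by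
  rw [spectrum.mem_iff, Algebra.algebraMap_eq_smul_one, Matrix.isUnit_iff_isUnit_det,
    isUnit_iff_ne_zero, not_not, ← Matrix.exists_mulVec_eq_zero_iff]
  simp only [Matrix.sub_mulVec, Matrix.smul_mulVec, Matrix.one_mulVec, sub_eq_zero]
  constructor
  · rintro ⟨v, h1, h2⟩; exact ⟨v, h1, h2.symm⟩
  · rintro ⟨v, h1, h2⟩; exact ⟨v, h1, h2.symm⟩

theorem stmt19 (n m : ℕ) [NeZero n] [NeZero m] (δ βbar : ℝ) (hδ : 0 < δ) (hβδ : δ < βbar)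
    (U : Matrix (Fin m) (Fin m) ℂ) (hU : U = Matrix.of fun i j => if j = i + 1 then 1 else 0)
    (W : Matrix (Fin n ⊕ Fin m) (Fin n ⊕ Fin m) ℂ)
    (hW : W = Matrix.fromBlocks 0 (Matrix.of fun _ _ => 1) 0 U)
    (βhat : Fin n ⊕ Fin m → ℝ) (hpos : ∀ i, 0 < βhat i)
    (hC : ∀ a : Fin m, βhat (Sum.inr a) = βbar)
    (hρ : sSup ((fun z : ℂ => ‖z‖) ''
        spectrum ℂ ((Matrix.diagonal fun a => (βhat (Sum.inr a) : ℂ)) * U)) = βbar) :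
    -sSup (Complex.re '' spectrum ℂ
        ((Matrix.diagonal fun i => (βhat i : ℂ)) * W - (δ : ℂ) • 1)) = δ - βbar ∧
      δ - βbar < 0 := by
  have hβpos : (0:ℝ) < βbar := lt_trans hδ hβδ
  have hβne : (βbar:ℂ) ≠ 0 := by exact_mod_cast ne_of_gt hβpos
  set D : Matrix (Fin n ⊕ Fin m) (Fin n ⊕ Fin m) ℂ :=
    Matrix.diagonal fun i => (βhat i : ℂ) with hD
  set M : Matrix (Fin n ⊕ Fin m) (Fin n ⊕ Fin m) ℂ := D * W with hM
  set A₂ : Matrix (Fin m) (Fin m) ℂ :=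
    (Matrix.diagonal fun a => (βhat (Sum.inr a) : ℂ)) * U with hA₂
  -- entries of M
  have hMent : ∀ i j, M i j = (βhat i : ℂ) * W i j := by
    intro i j; simp [hM, hD, Matrix.diagonal_mul]
  -- shift lemma
  have hshift : ∀ lam : ℂ, lam ∈ spectrum ℂ (M - (δ : ℂ) • 1) ↔ lam + δ ∈ spectrum ℂ M := by
    intro lam
    rw [spec_iff_aux, spec_iff_aux]
    constructor
    · rintro ⟨v, hv, he⟩
      refine ⟨v, hv, ?_⟩
      have := he
      rw [Matrix.sub_mulVec, Matrix.smul_mulVec, Matrix.one_mulVec, sub_eq_iff_eq_add] at this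
      rw [this, add_smul]
    · rintro ⟨v, hv, he⟩
      refine ⟨v, hv, ?_⟩
      rw [Matrix.sub_mulVec, Matrix.smul_mulVec, Matrix.one_mulVec, he, add_smul]
      module
  -- membership: βbar ∈ spectrum M
  have hmem : (βbar : ℂ) ∈ spectrum ℂ M := by
    rw [spec_iff_aux]
    refine ⟨Sum.elim (fun i => (βhat (Sum.inl i) : ℂ) * m / βbar) (fun _ => 1), ?_, ?_⟩
    · intro h
      have := congrFun h (Sum.inr 0)
      simp at this
    · funext i
      cases i with
      | inl a =>
        simp only [Matrix.mulVec, dotProduct, Pi.smul_apply, smul_eq_mul]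
        rw [Fintype.sum_sum_type]
        simp only [hMent, hW, Matrix.fromBlocks_apply₁₁, Matrix.fromBlocks_apply₁₂,
          Matrix.zero_apply, Matrix.of_apply, Sum.elim_inl, Sum.elim_inr, mul_zero, zero_mul,
          mul_one, Finset.sum_const_zero, zero_add]
        rw [Finset.sum_const, Finset.card_univ, Fintype.card_fin]
        field_simp
        ring
      | inr a =>
        simp only [Matrix.mulVec, dotProduct, Pi.smul_apply, smul_eq_mul]
        rw [Fintype.sum_sum_type]
        simp only [hMent, hW, hU, Matrix.fromBlocks_apply₂₁, Matrix.fromBlocks_apply₂₂,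
          Matrix.zero_apply, Matrix.of_apply, Sum.elim_inl, Sum.elim_inr, mul_zero, zero_mul,
          mul_one, Finset.sum_const_zero, zero_add, hC, mul_ite, mul_zero, mul_one]
        simp [Finset.sum_ite_eq']
  -- upper bound: every eigenvalue of M has re ≤ βbar
  have hub : ∀ μ : ℂ, μ ∈ spectrum ℂ M → μ.re ≤ βbar := by
    intro μ hμ
    rw [spec_iff_aux] at hμ
    obtain ⟨v, hv, he⟩ := hμ
    have hinl : ∀ a : Fin n, (βhat (Sum.inl a) : ℂ) * (∑ b : Fin m, v (Sum.inr b)) =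
        μ * v (Sum.inl a) := by
      intro a
      have := congrFun he (Sum.inl a)
      simp only [Matrix.mulVec, dotProduct, Pi.smul_apply, smul_eq_mul] at this
      rw [Fintype.sum_sum_type] at this
      simpa [hMent, hW, Finset.mul_sum] using this
    have hinr : ∀ a : Fin m, (βbar : ℂ) * v (Sum.inr (a + 1)) = μ * v (Sum.inr a) := by
      intro a
      have := congrFun he (Sum.inr a)
      simp only [Matrix.mulVec, dotProduct, Pi.smul_apply, smul_eq_mul] at this
      rw [Fintype.sum_sum_type] at this
      simpa [hMent, hW, hU, hC, mul_ite, Finset.sum_ite_eq'] using this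
    by_cases hy : (fun a : Fin m => v (Sum.inr a)) = 0
    · -- cycle part zero ⇒ μ = 0
      have hsum : (∑ b : Fin m, v (Sum.inr b)) = 0 := by
        simp [funext_iff] at hy
        exact Finset.sum_eq_zero fun b _ => hy b
      have hμ0 : μ = 0 := by
        obtain ⟨i, hi⟩ := Function.ne_iff.mp hv
        cases i with
        | inl a =>
          have := hinl a
          rw [hsum, mul_zero] at this
          exact (mul_eq_zero.mp this.symm).resolve_right hi
        | inr a =>
          exact absurd (congrFun hy a) hi
      simp [hμ0]; positivity
    · -- μ is an eigenvalue of A₂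
      have hA : μ ∈ spectrum ℂ A₂ := by
        rw [spec_iff_aux]
        refine ⟨fun a => v (Sum.inr a), hy, ?_⟩
        funext a
        simp only [Matrix.mulVec, dotProduct, Pi.smul_apply, smul_eq_mul, hA₂,
          Matrix.diagonal_mul, Matrix.of_apply, hU, hC, mul_ite, mul_zero, mul_one]
        simpa [ite_mul, Finset.sum_ite_eq'] using hinr a
      have habs : ‖μ‖ ≤ βbar := by
        rw [← hρ]
        exact le_csSup ((A₂.finite_spectrum.image _).bddAbove) ⟨μ, hA, rfl⟩
      exact le_trans (Complex.re_le_norm μ) habs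
  -- combine
  have hgreat : IsGreatest (Complex.re '' spectrum ℂ (M - (δ : ℂ) • 1)) (βbar - δ) := by
    constructor
    · refine ⟨(βbar : ℂ) - δ, ?_, by simp⟩
      rw [hshift]
      simpa using hmem
    · rintro x ⟨lam, hlam, rfl⟩
      rw [hshift] at hlam
      have := hub _ hlam
      simp only [Complex.add_re, Complex.ofReal_re] at this
      linarith
  rw [hgreat.csSup_eq]
  constructor
  · ring
  · linarith
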